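/- Let X be a nonempty compact metric space and let A be a stably finite unital C*-algebra. Then rc(A) ≤ rc(C(X, A)), where C(X, A) is the C*-algebra of continuous A-valued functions on X (canonically isomorphic to C(X) ⊗ A). -/

import Mathlib

open Filter Topology
open scoped ENNReal

/-- A positive element of a C*-algebra: one of the form `y* y`. -/
def IsPositiveElem {D : Type*} [Mul D] [Star D] (a : D) : Prop :=
  ∃ y : D, a = star y * y

/-- Cuntz subequivalence in `D`: `a ≾_D b` iff there is a sequence `(cₙ)` in `D` with
`cₙ * b * cₙ* → a`. -/
def CuntzSub {D : Type*} [Mul D] [Star D] [TopologicalSpace D] (a b : D) : Prop :=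
  ∃ c : ℕ → D, Tendsto (fun n => c n * b * star (c n)) atTop (nhds a)

/-- A normalized 2-quasitrace on a unital complex *-algebra `D`: a function `D → ℂ` with
`τ(1) = 1`, `τ(x* x) = τ(x x*) ≥ 0`, linear on every commutative *-subalgebra, bundled
together with extensions to all matrix algebras `Mₙ(D)` having the corresponding quasitrace
properties and normalized so that `τₙ(x ⊗ e₁₁) = τ(x)`. -/
structure Quasitrace (D : Type*) [Ring D] [StarRing D] [Algebra ℂ D] [StarModule ℂ D] where
  toFun : D → ℂ
  matFun : (n : ℕ) → Matrix (Fin n) (Fin n) D → ℂ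
  norm_one : toFun 1 = 1
  tracial : ∀ x : D, toFun (star x * x) = toFun (x * star x)
  nonneg : ∀ x : D, ∃ r : ℝ, 0 ≤ r ∧ toFun (star x * x) = (r : ℂ)
  linear_on_comm : ∀ S : StarSubalgebra ℂ D, (∀ x ∈ S, ∀ y ∈ S, x * y = y * x) →
    (∀ x ∈ S, ∀ y ∈ S, toFun (x + y) = toFun x + toFun y) ∧
    (∀ (c : ℂ), ∀ x ∈ S, toFun (c • x) = c * toFun x)
  mat_tracial : ∀ (n : ℕ) (x : Matrix (Fin n) (Fin n) D),
    matFun n (star x * x) = matFun n (x * star x)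
  mat_nonneg : ∀ (n : ℕ) (x : Matrix (Fin n) (Fin n) D),
    ∃ r : ℝ, 0 ≤ r ∧ matFun n (star x * x) = (r : ℂ)
  mat_linear_on_comm : ∀ (n : ℕ) (S : StarSubalgebra ℂ (Matrix (Fin n) (Fin n) D)),
    (∀ x ∈ S, ∀ y ∈ S, x * y = y * x) →
    (∀ x ∈ S, ∀ y ∈ S, matFun n (x + y) = matFun n x + matFun n y) ∧
    (∀ (c : ℂ), ∀ x ∈ S, matFun n (c • x) = c * matFun n x)
  mat_corner : ∀ (n : ℕ) (x : D),
    matFun (n + 1) (Matrix.of fun i j => if i = 0 ∧ j = 0 then x else 0) = toFun x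

/-- `IsDimValue τ n a L` says that `L = d_τ(a) = lim_k τₙ(a^{1/k})`, where the powers `a^{1/k}`
(given by continuous functional calculus) are encoded as a sequence of positive `k`-th roots
of `a`; such roots are unique in a C*-algebra. -/
def IsDimValue {D : Type*} [Ring D] [StarRing D] [Algebra ℂ D] [StarModule ℂ D]
    (τ : Quasitrace D) (n : ℕ) (a : Matrix (Fin n) (Fin n) D) (L : ℝ) : Prop :=
  ∃ rt : ℕ → Matrix (Fin n) (Fin n) D,
    (∀ k : ℕ, 1 ≤ k → IsPositiveElem (rt k) ∧ rt k ^ k = a) ∧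
    Tendsto (fun k => τ.matFun n (rt k)) atTop (nhds (L : ℂ))

/-- The embedding of `M_m(D)` into `M_N(D)` as the upper-left corner. -/
def cornerEmbed {D : Type*} [Zero D] {m : ℕ} (N : ℕ) (a : Matrix (Fin m) (Fin m) D) :
    Matrix (Fin N) (Fin N) D :=
  Matrix.of fun i j =>
    if h : (i : ℕ) < m ∧ (j : ℕ) < m then a ⟨i, h.1⟩ ⟨j, h.2⟩ else 0

/-- `D` has `r`-comparison if whenever `a ∈ M_m(D)₊`, `b ∈ M_n(D)₊` satisfy
`d_τ(a) + r < d_τ(b)` for every normalized 2-quasitrace `τ` on `D`, then `a ≾ b` in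
`M_{max(m,n)}(D)`. -/
def RComparison (D : Type*) [Ring D] [StarRing D] [Algebra ℂ D] [StarModule ℂ D]
    [TopologicalSpace D] (r : ℝ) : Prop :=
  ∀ (m n : ℕ), 1 ≤ m → 1 ≤ n →
    ∀ (a : Matrix (Fin m) (Fin m) D) (b : Matrix (Fin n) (Fin n) D),
      IsPositiveElem a → IsPositiveElem b →
      (∀ (τ : Quasitrace D) (da db : ℝ),
        IsDimValue τ m a da → IsDimValue τ n b db → da + r < db) →
      CuntzSub (cornerEmbed (max m n) a) (cornerEmbed (max m n) b)

/-- The radius of comparison of `D`: the infimum in `[0, ∞]` of the set of `r ∈ [0, ∞)` such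
that `D` has `r`-comparison (equal to `∞` if this set is empty). -/
noncomputable def radiusCmp (D : Type*) [Ring D] [StarRing D] [Algebra ℂ D] [StarModule ℂ D]
    [TopologicalSpace D] : ℝ≥0∞ :=
  sInf {x : ℝ≥0∞ | ∃ r : ℝ, 0 ≤ r ∧ x = ENNReal.ofReal r ∧ RComparison D r}

/-- A unital *-ring is *finite* if `x* x = 1` implies `x x* = 1`. -/
def IsFiniteStarRing (D : Type*) [Ring D] [StarRing D] : Prop :=
  ∀ x : D, star x * x = 1 → x * star x = 1

/-- A unital *-ring is *stably finite* if every matrix algebra `Mₙ(D)` (`n ≥ 1`) is finite. -/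
def IsStablyFinite (D : Type*) [Ring D] [StarRing D] : Prop :=
  ∀ n : ℕ, 1 ≤ n → IsFiniteStarRing (Matrix (Fin n) (Fin n) D)

set_option linter.unusedSectionVars false
open scoped WithCStarModule InnerProductSpace
noncomputable section
namespace MatCStar
variable {B : Type*} [CStarAlgebra B] [PartialOrder B] [StarOrderedRing B] {N : ℕ}

abbrev V (N : ℕ) (B : Type*) [CStarAlgebra B] [PartialOrder B] [StarOrderedRing B] :=
  C⋆ᵐᵒᵈ(B, Fin N → B)

def toLin (M : Matrix (Fin N) (Fin N) B) : V N B →ₗ[ℂ] V N B where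
  toFun v := (WithCStarModule.equiv _ _).symm
    (fun i => ∑ j, (WithCStarModule.equiv _ _ v) j * star (M i j))
  map_add' v w := by
    ext i
    simp [add_mul, Finset.sum_add_distrib]
  map_smul' c v := by
    ext i
    simp [Finset.smul_sum, smul_mul_assoc]

@[simp] lemma toLin_apply (M : Matrix (Fin N) (Fin N) B) (v : V N B) (i : Fin N) :
    toLin M v i = ∑ j, v j * star (M i j) := rfl

lemma toLin_bound (M : Matrix (Fin N) (Fin N) B) (v : V N B) :
    ‖toLin M v‖ ≤ (∑ i, ∑ j, ‖M i j‖) * ‖v‖ := by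
  calc ‖toLin M v‖ ≤ ∑ i, ‖toLin M v i‖ := WithCStarModule.pi_norm_le_sum_norm _
    _ ≤ ∑ i, ∑ j, ‖M i j‖ * ‖v‖ := by
        refine Finset.sum_le_sum fun i _ => ?_
        rw [toLin_apply]
        refine (norm_sum_le _ _).trans (Finset.sum_le_sum fun j _ => ?_)
        refine (norm_mul_le _ _).trans ?_
        rw [norm_star, mul_comm]
        exact mul_le_mul_of_nonneg_left (WithCStarModule.norm_apply_le_norm v j) (norm_nonneg _)
    _ = (∑ i, ∑ j, ‖M i j‖) * ‖v‖ := by rw [Finset.sum_mul]; simp [Finset.sum_mul]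

def toCLM (M : Matrix (Fin N) (Fin N) B) : V N B →L[ℂ] V N B :=
  LinearMap.mkContinuous (toLin M) (∑ i, ∑ j, ‖M i j‖) (toLin_bound M)

@[simp] lemma toCLM_apply (M : Matrix (Fin N) (Fin N) B) (v : V N B) (i : Fin N) :
    toCLM M v i = ∑ j, v j * star (M i j) := rfl

lemma toCLM_mul (M M' : Matrix (Fin N) (Fin N) B) :
    toCLM (M * M') = (toCLM M).comp (toCLM M') := by
  ext v i
  simp only [toCLM_apply, ContinuousLinearMap.comp_apply, Matrix.mul_apply, star_sum, star_mul]
  simp only [Finset.sum_mul, Finset.mul_sum, mul_assoc]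
  exact Finset.sum_comm

lemma toCLM_one : toCLM (1 : Matrix (Fin N) (Fin N) B) = ContinuousLinearMap.id ℂ (V N B) := by
  ext v i
  simp only [toCLM_apply, ContinuousLinearMap.id_apply]
  rw [Finset.sum_eq_single i (fun b _ hb => by simp [Matrix.one_apply_ne' hb]) (by simp)]
  simp

lemma toCLM_add (M M' : Matrix (Fin N) (Fin N) B) :
    toCLM (M + M') = toCLM M + toCLM M' := by
  ext v i
  simp [mul_add, Finset.sum_add_distrib]

lemma toCLM_neg (M : Matrix (Fin N) (Fin N) B) : toCLM (-M) = -toCLM M := by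
  ext v i
  simp [Finset.sum_neg_distrib]

lemma toCLM_smul (c : ℂ) (M : Matrix (Fin N) (Fin N) B) :
    toCLM (c • M) = (starRingEnd ℂ c) • toCLM M := by
  ext v i
  simp [Finset.smul_sum, star_smul, mul_smul_comm]

lemma inner_toCLM (M : Matrix (Fin N) (Fin N) B) (v w : V N B) :
    ⟪toCLM M v, w⟫_B = ⟪v, toCLM (star M) w⟫_B := by
  simp only [WithCStarModule.pi_inner, WithCStarModule.inner_def, toCLM_apply, star_sum,
    Finset.sum_mul, Finset.mul_sum, star_mul, Matrix.star_apply, star_star, mul_assoc]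
  exact Finset.sum_comm

/-- the canonical "basis vector" in `V N B`. -/
def e (i : Fin N) : V N B := (WithCStarModule.equiv _ _).symm (Pi.single i (1 : B))

lemma toCLM_e (M : Matrix (Fin N) (Fin N) B) (j : Fin N) (i : Fin N) :
    toCLM M (e j) i = star (M i j) := by
  simp only [toCLM_apply, e]
  rw [Finset.sum_eq_single j]
  · simp [Pi.single_eq_same]
  · intro k _ hk
    simp [Pi.single_eq_of_ne hk]
  · simp

lemma inner_e_toCLM (M : Matrix (Fin N) (Fin N) B) (i j : Fin N) :
    ⟪e i, toCLM M (e j)⟫_B = star (M i j) := by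
  rw [show (e i : V N B) = (WithCStarModule.equiv _ _).symm (Pi.single i (1:B)) from rfl,
    WithCStarModule.inner_single_left, WithCStarModule.inner_def, toCLM_e, star_one, mul_one]


lemma norm_e [Nontrivial B] (i : Fin N) : ‖(e i : V N B)‖ = 1 := by
  rw [show (e i : V N B) = (WithCStarModule.equiv _ _).symm (Pi.single i (1:B)) from rfl,
    WithCStarModule.norm_single]
  exact norm_one

lemma entry_norm_le [Nontrivial B] (M : Matrix (Fin N) (Fin N) B) (i j : Fin N) :
    ‖M i j‖ ≤ ‖toCLM M‖ := by
  calc ‖M i j‖ = ‖⟪e i, toCLM M (e j)⟫_B‖ := by rw [inner_e_toCLM, norm_star]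
    _ ≤ ‖(e i : V N B)‖ * ‖toCLM M (e j)‖ := CStarModule.norm_inner_le (A := B) (E := V N B)
    _ ≤ 1 * (‖toCLM M‖ * ‖e j‖) := by
        rw [norm_e]
        exact mul_le_mul_of_nonneg_left ((toCLM M).le_opNorm _) (by norm_num)
    _ = ‖toCLM M‖ := by rw [norm_e]; ring

lemma toCLM_injective : Function.Injective (toCLM (B := B) (N := N)) := by
  intro M M' h
  ext i j
  have h2 : toCLM M (e j) i = toCLM M' (e j) i := by rw [h]
  rwa [toCLM_e, toCLM_e, star_inj] at h2


lemma toCLM_zero : toCLM (0 : Matrix (Fin N) (Fin N) B) = 0 := by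
  ext v i
  simp

lemma opnorm_le_sum (M : Matrix (Fin N) (Fin N) B) :
    ‖toCLM M‖ ≤ ∑ i, ∑ j, ‖M i j‖ := by
  refine ContinuousLinearMap.opNorm_le_bound _ ?_ (toLin_bound M)
  positivity

lemma opnorm_sq_le (M : Matrix (Fin N) (Fin N) B) :
    ‖toCLM M‖ * ‖toCLM M‖ ≤ ‖toCLM (star M * M)‖ := by
  have hbd : ∀ v : V N B, ‖toCLM M v‖ ≤ Real.sqrt ‖toCLM (star M * M)‖ * ‖v‖ := by
    intro v
    have h1 : ‖toCLM M v‖ ^ 2 = ‖⟪toCLM M v, toCLM M v⟫_B‖ := CStarModule.norm_sq_eq (A := B)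
    have h2 : ⟪toCLM M v, toCLM M v⟫_B = ⟪v, toCLM (star M * M) v⟫_B := by
      rw [inner_toCLM, toCLM_mul]; rfl
    have h3 : ‖⟪v, toCLM (star M * M) v⟫_B‖ ≤ ‖v‖ * (‖toCLM (star M * M)‖ * ‖v‖) :=
      (CStarModule.norm_inner_le (A := B) (E := V N B)).trans
        (mul_le_mul_of_nonneg_left ((toCLM (star M * M)).le_opNorm v) (norm_nonneg _))
    have h4 : ‖toCLM M v‖ ^ 2 ≤ ‖toCLM (star M * M)‖ * ‖v‖ ^ 2 := by
      rw [h1, h2]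
      refine h3.trans_eq ?_
      ring
    calc ‖toCLM M v‖ = Real.sqrt (‖toCLM M v‖ ^ 2) := (Real.sqrt_sq (norm_nonneg _)).symm
      _ ≤ Real.sqrt (‖toCLM (star M * M)‖ * ‖v‖ ^ 2) := Real.sqrt_le_sqrt h4
      _ = Real.sqrt ‖toCLM (star M * M)‖ * ‖v‖ := by
          rw [Real.sqrt_mul ((toCLM (star M * M)).opNorm_nonneg), Real.sqrt_sq (norm_nonneg v)]
  have h := ContinuousLinearMap.opNorm_le_bound _ (Real.sqrt_nonneg _) hbd
  calc ‖toCLM M‖ * ‖toCLM M‖ ≤ Real.sqrt ‖toCLM (star M * M)‖ * Real.sqrt ‖toCLM (star M * M)‖ :=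
        mul_le_mul h h ((toCLM M).opNorm_nonneg) (Real.sqrt_nonneg _)
    _ = ‖toCLM (star M * M)‖ := Real.mul_self_sqrt ((toCLM (star M * M)).opNorm_nonneg)

lemma opnorm_star (M : Matrix (Fin N) (Fin N) B) : ‖toCLM (star M)‖ = ‖toCLM M‖ := by
  have key : ∀ M' : Matrix (Fin N) (Fin N) B, ‖toCLM M'‖ ≤ ‖toCLM (star M')‖ := by
    intro M'
    rcases eq_or_lt_of_le ((toCLM M').opNorm_nonneg) with h0 | h0
    · rw [← h0]; exact ContinuousLinearMap.opNorm_nonneg _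
    · have h := (opnorm_sq_le M').trans ((toCLM_mul (star M') M') ▸
        (ContinuousLinearMap.opNorm_comp_le (toCLM (star M')) (toCLM M')))
      exact le_of_mul_le_mul_right (by linarith) h0
  refine le_antisymm ?_ (key M)
  have h := key (star M)
  rwa [star_star] at h

lemma opnorm_star_mul_self (M : Matrix (Fin N) (Fin N) B) :
    ‖toCLM M‖ * ‖toCLM M‖ ≤ ‖toCLM (star M * M)‖ := opnorm_sq_le M

end MatCStar

/-- Type synonym of matrices over a C*-algebra, to be equipped with the operator norm. -/
def MatC (N : ℕ) (B : Type*) := Matrix (Fin N) (Fin N) B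

namespace MatC
variable {B : Type*} [CStarAlgebra B] [PartialOrder B] [StarOrderedRing B] [Nontrivial B] {N : ℕ}

instance : Ring (MatC N B) := inferInstanceAs (Ring (Matrix (Fin N) (Fin N) B))
instance : StarRing (MatC N B) := inferInstanceAs (StarRing (Matrix (Fin N) (Fin N) B))
instance : Algebra ℂ (MatC N B) := inferInstanceAs (Algebra ℂ (Matrix (Fin N) (Fin N) B))
instance : StarModule ℂ (MatC N B) :=
  inferInstanceAs (StarModule ℂ (Matrix (Fin N) (Fin N) B))

/-- The norm-defining map to continuous linear maps. -/
noncomputable def cl (M : MatC N B) : MatCStar.V N B →L[ℂ] MatCStar.V N B :=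
  MatCStar.toCLM (N := N) (B := B) M

lemma cl_add (M M' : MatC N B) : cl (M + M') = cl M + cl M' := MatCStar.toCLM_add M M'
lemma cl_neg (M : MatC N B) : cl (-M) = -cl M := MatCStar.toCLM_neg M
lemma cl_zero : cl (0 : MatC N B) = 0 := MatCStar.toCLM_zero
lemma cl_mul (M M' : MatC N B) : cl (M * M') = (cl M).comp (cl M') := MatCStar.toCLM_mul M M'
lemma cl_smul (c : ℂ) (M : MatC N B) : cl (c • M) = (starRingEnd ℂ c) • cl M := MatCStar.toCLM_smul c M
lemma cl_star_mul_self (M : MatC N B) : ‖cl M‖ * ‖cl M‖ ≤ ‖cl (star M * M)‖ :=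
  MatCStar.opnorm_star_mul_self (B := B) (N := N) M
lemma cl_inj : Function.Injective (cl (B := B) (N := N)) := fun M M' h =>
  MatCStar.toCLM_injective (B := B) (N := N) h

noncomputable instance : NormedAddCommGroup (MatC N B) :=
  AddGroupNorm.toNormedAddCommGroup
    { toFun := fun M => ‖cl M‖
      map_zero' := by
        show ‖cl (0 : MatC N B)‖ = 0
        rw [cl_zero]
        exact ContinuousLinearMap.opNorm_zero
      add_le' := fun M M' => by
        show ‖cl (M + M')‖ ≤ ‖cl M‖ + ‖cl M'‖
        rw [cl_add]
        exact ContinuousLinearMap.opNorm_add_le _ _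
      neg' := fun M => by
        show ‖cl (-M)‖ = ‖cl M‖
        rw [cl_neg]
        exact ContinuousLinearMap.opNorm_neg _
      eq_zero_of_map_eq_zero' := fun M hM => by
        refine cl_inj (a₁ := M) (a₂ := 0) ?_
        rw [cl_zero]
        have hM' : ‖cl M‖ = 0 := hM
        refine ContinuousLinearMap.ext fun v => ?_
        have h0 : ‖cl M v‖ ≤ 0 := by
          simpa [hM'] using (cl M).le_opNorm v
        simpa using norm_le_zero_iff.mp h0 }

lemma norm_def (M : MatC N B) : ‖M‖ = ‖cl M‖ := rfl

noncomputable instance : NormedRing (MatC N B) :=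
  { (inferInstance : NormedAddCommGroup (MatC N B)),
    (inferInstance : Ring (MatC N B)) with
    norm_mul_le := fun M M' => by
      rw [norm_def, norm_def, norm_def, cl_mul]
      exact ContinuousLinearMap.opNorm_comp_le _ _ }

noncomputable instance : NormedAlgebra ℂ (MatC N B) :=
  { (inferInstance : Algebra ℂ (MatC N B)) with
    norm_smul_le := fun c M => by
      rw [norm_def, norm_def, cl_smul]
      refine ContinuousLinearMap.opNorm_le_bound _ (by positivity) fun v => ?_
      rw [ContinuousLinearMap.smul_apply, norm_smul, Complex.norm_conj]
      exact (mul_le_mul_of_nonneg_left ((cl M).le_opNorm v)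
        (norm_nonneg c)).trans_eq (mul_assoc _ _ _).symm }

instance : CStarRing (MatC N B) where
  norm_mul_self_le M := by
    rw [norm_def, norm_def]
    exact cl_star_mul_self M

end MatC


namespace MatC
variable {B : Type*} [CStarAlgebra B] [PartialOrder B] [StarOrderedRing B] [Nontrivial B] {N : ℕ}

/-- View an element of `MatC` as a matrix. -/
def ent (M : MatC N B) : Matrix (Fin N) (Fin N) B := M

lemma entry_le (M : MatC N B) (i j : Fin N) : ‖ent M i j‖ ≤ ‖M‖ :=
  MatCStar.entry_norm_le (ent M) i j

lemma norm_le_sum (M : MatC N B) : ‖M‖ ≤ ∑ i, ∑ j, ‖ent M i j‖ :=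
  MatCStar.opnorm_le_sum (ent M)

set_option maxHeartbeats 1000000 in
instance : CompleteSpace (MatC N B) := by
  refine Metric.complete_of_cauchySeq_tendsto fun u hu => ?_
  have hent : ∀ i j, CauchySeq fun n => ent (u n) i j := by
    intro i j
    rw [Metric.cauchySeq_iff] at hu ⊢
    intro ε hε
    obtain ⟨K, hK⟩ := hu ε hε
    refine ⟨K, fun m hm n hn => lt_of_le_of_lt ?_ (hK m hm n hn)⟩
    rw [dist_eq_norm, dist_eq_norm]
    exact entry_le (u m - u n) i j
  have hlim : ∀ i j, ∃ l : B, Filter.Tendsto (fun n => ent (u n) i j) Filter.atTop (nhds l) :=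
    fun i j => cauchySeq_tendsto_of_complete (hent i j)
  choose L hL using hlim
  set Lm : MatC N B := (Matrix.of L : Matrix (Fin N) (Fin N) B) with hLm
  refine ⟨Lm, ?_⟩
  rw [tendsto_iff_norm_sub_tendsto_zero]
  have hb : ∀ n, ‖u n - Lm‖ ≤
      ∑ i, ∑ j, ‖ent (u n) i j - L i j‖ := fun n => norm_le_sum _
  refine squeeze_zero (fun n => norm_nonneg _) hb ?_
  have : ∀ i j, Filter.Tendsto (fun n => ‖ent (u n) i j - L i j‖) Filter.atTop (nhds 0) :=
    fun i j => (tendsto_iff_norm_sub_tendsto_zero).mp (hL i j)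
  have h0 : (0 : ℝ) = ∑ i : Fin N, ∑ j : Fin N, (0 : ℝ) := by simp
  rw [h0]
  exact tendsto_finset_sum _ fun i _ => tendsto_finset_sum _ fun j _ => this i j

noncomputable instance : CStarAlgebra (MatC N B) where

end MatC

theorem pos_pow_inj {D : Type*} [CStarAlgebra D] {p q : D}
    (hp : ∃ y : D, p = star y * y) (hq : ∃ z : D, q = star z * z) {k : ℕ} (hk : k ≠ 0)
    (h : p ^ k = q ^ k) : p = q := by
  letI := CStarAlgebra.spectralOrder D
  haveI := CStarAlgebra.spectralOrderedRing D
  obtain ⟨y, rfl⟩ := hp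
  obtain ⟨z, rfl⟩ := hq
  have hp' : 0 ≤ star y * y := star_mul_self_nonneg y
  have hq' : 0 ≤ star z * z := star_mul_self_nonneg z
  have key : ∀ a : D, 0 ≤ a → ((a ^ k) ^ ((k : ℝ)⁻¹) : D) = a := by
    intro a ha
    rw [← CFC.rpow_natCast a k ha, CFC.rpow_rpow_of_exponent_nonneg a _ _ (by positivity)
      (by positivity) ha, mul_inv_cancel₀ (by exact_mod_cast hk), CFC.rpow_one a ha]
  rw [← key _ hp', ← key _ hq', h]

theorem matrix_pos_pow_inj {B : Type*} [CStarAlgebra B] {N k : ℕ} (hk : k ≠ 0)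
    {p q : Matrix (Fin N) (Fin N) B}
    (hp : ∃ y : Matrix (Fin N) (Fin N) B, p = star y * y)
    (hq : ∃ z : Matrix (Fin N) (Fin N) B, q = star z * z)
    (h : p ^ k = q ^ k) : p = q := by
  rcases subsingleton_or_nontrivial B with hB | hB
  · haveI : Subsingleton (Matrix (Fin N) (Fin N) B) :=
      ⟨fun a b => by ext i j; exact Subsingleton.elim _ _⟩
    exact Subsingleton.elim p q
  · letI := CStarAlgebra.spectralOrder B
    haveI := CStarAlgebra.spectralOrderedRing B
    have hp' : ∃ y : MatC N B, p = star y * y := hp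
    have hq' : ∃ z : MatC N B, q = star z * z := hq
    exact pos_pow_inj (D := MatC N B) hp' hq' hk h

section Transfer

open Filter Topology

variable {X : Type*} [TopologicalSpace X] {A : Type*} [CStarAlgebra A]

/-- The constant-functions embedding as a star algebra homomorphism. -/
def constSAH (X : Type*) [TopologicalSpace X] (A : Type*) [CStarAlgebra A] :
    A →⋆ₐ[ℂ] C(X, A) where
  toFun a := ContinuousMap.const X a
  map_one' := by ext; rfl
  map_mul' _ _ := by ext; rfl
  map_zero' := by ext; rfl
  map_add' _ _ := by ext; rfl
  commutes' _ := by ext; rfl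
  map_star' _ := by ext; rfl

/-- Evaluation at a point as a star algebra homomorphism. -/
def evSAH (x : X) : C(X, A) →⋆ₐ[ℂ] A where
  toFun f := f x
  map_one' := rfl
  map_mul' _ _ := rfl
  map_zero' := rfl
  map_add' _ _ := rfl
  commutes' _ := rfl
  map_star' _ := rfl

/-- Entrywise application of a star algebra homomorphism to square matrices. -/
def matSAH {R S : Type*} [Ring R] [StarRing R] [Algebra ℂ R] [Ring S] [StarRing S]
    [Algebra ℂ S] (f : R →⋆ₐ[ℂ] S) (n : ℕ) :
    Matrix (Fin n) (Fin n) R →⋆ₐ[ℂ] Matrix (Fin n) (Fin n) S :=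
  { f.toAlgHom.mapMatrix with
    map_star' := fun M => by
      show Matrix.map (star M) f = star (Matrix.map M f)
      rw [Matrix.star_eq_conjTranspose, Matrix.star_eq_conjTranspose]
      exact Matrix.conjTranspose_map f fun a => map_star f a }

lemma matSAH_apply {R S : Type*} [Ring R] [StarRing R] [Algebra ℂ R] [Ring S] [StarRing S]
    [Algebra ℂ S] (f : R →⋆ₐ[ℂ] S) {n : ℕ} (M : Matrix (Fin n) (Fin n) R) (i j : Fin n) :
    matSAH f n M i j = f (M i j) := rfl

lemma IsPositiveElem.mapSAH {R S : Type*} [Ring R] [StarRing R] [Algebra ℂ R] [Ring S]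
    [StarRing S] [Algebra ℂ S] (f : R →⋆ₐ[ℂ] S) {p : R} (hp : IsPositiveElem p) :
    IsPositiveElem (f p) := by
  obtain ⟨y, rfl⟩ := hp
  exact ⟨f y, by rw [map_mul, map_star]⟩

lemma ev_const_matrix {m : ℕ} (x : X) (a : Matrix (Fin m) (Fin m) A) :
    matSAH (evSAH x) m (matSAH (constSAH X A) m a) = a := by
  ext i j
  rfl

end Transfer


section Transfer2

open Filter Topology

variable {X : Type*} [TopologicalSpace X] {A : Type*} [CStarAlgebra A]

/-- Pull back a quasitrace on `C(X, A)` to `A` along the constant embedding. -/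
noncomputable def pullbackQT (τ : Quasitrace C(X, A)) : Quasitrace A where
  toFun x := τ.toFun (constSAH X A x)
  matFun n M := τ.matFun n (matSAH (constSAH X A) n M)
  norm_one := by rw [map_one]; exact τ.norm_one
  tracial x := by
    rw [map_mul, map_mul, map_star]
    exact τ.tracial _
  nonneg x := by
    rw [map_mul, map_star]
    exact τ.nonneg _
  linear_on_comm S hS := by
    have hS' : ∀ x ∈ S.map (constSAH X A), ∀ y ∈ S.map (constSAH X A), x * y = y * x := by
      rintro x' hx' y' hy'
      obtain ⟨x, hx, rfl⟩ := (StarSubalgebra.mem_map).mp hx'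
      obtain ⟨y, hy, rfl⟩ := (StarSubalgebra.mem_map).mp hy'
      rw [← map_mul, ← map_mul, hS x hx y hy]
    obtain ⟨h1, h2⟩ := τ.linear_on_comm (S.map (constSAH X A)) hS'
    constructor
    · intro x hx y hy
      rw [map_add]
      exact h1 _ (StarSubalgebra.mem_map.mpr ⟨x, hx, rfl⟩) _
        (StarSubalgebra.mem_map.mpr ⟨y, hy, rfl⟩)
    · intro c x hx
      rw [map_smul]
      exact h2 c _ (StarSubalgebra.mem_map.mpr ⟨x, hx, rfl⟩)
  mat_tracial n M := by
    rw [map_mul, map_mul, map_star]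
    exact τ.mat_tracial n _
  mat_nonneg n M := by
    rw [map_mul, map_star]
    exact τ.mat_nonneg n _
  mat_linear_on_comm n S hS := by
    have hS' : ∀ x ∈ S.map (matSAH (constSAH X A) n), ∀ y ∈ S.map (matSAH (constSAH X A) n),
        x * y = y * x := by
      rintro x' hx' y' hy'
      obtain ⟨x, hx, rfl⟩ := (StarSubalgebra.mem_map).mp hx'
      obtain ⟨y, hy, rfl⟩ := (StarSubalgebra.mem_map).mp hy'
      rw [← map_mul, ← map_mul, hS x hx y hy]
    obtain ⟨h1, h2⟩ := τ.mat_linear_on_comm n (S.map (matSAH (constSAH X A) n)) hS'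
    constructor
    · intro x hx y hy
      rw [map_add]
      exact h1 _ (StarSubalgebra.mem_map.mpr ⟨x, hx, rfl⟩) _
        (StarSubalgebra.mem_map.mpr ⟨y, hy, rfl⟩)
    · intro c x hx
      rw [map_smul]
      exact h2 c _ (StarSubalgebra.mem_map.mpr ⟨x, hx, rfl⟩)
  mat_corner n x := by
    have key : matSAH (constSAH X A) (n + 1)
        (Matrix.of fun i j => if i = 0 ∧ j = 0 then x else 0)
        = Matrix.of fun i j => if i = 0 ∧ j = 0 then constSAH X A x else 0 := by
      ext i j
      rw [matSAH_apply]
      by_cases h : i = 0 ∧ j = 0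
      · simp [h]
      · simp [h]
    rw [key]
    exact τ.mat_corner n (constSAH X A x)

end Transfer2


section Transfer3

open Filter Topology

variable {X : Type*} [TopologicalSpace X] {A : Type*} [CStarAlgebra A]

lemma isDimValue_pullback (x₀ : X) (τ : Quasitrace C(X, A)) {m : ℕ}
    (a : Matrix (Fin m) (Fin m) A) (L : ℝ)
    (h : IsDimValue τ m (matSAH (constSAH X A) m a) L) :
    IsDimValue (pullbackQT τ) m a L := by
  obtain ⟨rt, hrt, hlim⟩ := h
  have hconst : ∀ k, 1 ≤ k → matSAH (constSAH X A) m (matSAH (evSAH x₀) m (rt k)) = rt k := by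
    intro k hk
    have hsame : ∀ x : X, matSAH (evSAH x) m (rt k) = matSAH (evSAH x₀) m (rt k) := by
      intro x
      have hk0 : k ≠ 0 := by omega
      refine matrix_pos_pow_inj hk0 ((hrt k hk).1.mapSAH _) ((hrt k hk).1.mapSAH _) ?_
      rw [← map_pow, ← map_pow, (hrt k hk).2, ev_const_matrix, ev_const_matrix]
    ext i j x
    have hx := congrArg (fun M : Matrix (Fin m) (Fin m) A => M i j) (hsame x)
    exact hx.symm
  refine ⟨fun k => matSAH (evSAH x₀) m (rt k), fun k hk => ⟨(hrt k hk).1.mapSAH _, ?_⟩, ?_⟩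
  · rw [← map_pow, (hrt k hk).2, ev_const_matrix]
  · refine Filter.Tendsto.congr' ?_ hlim
    filter_upwards [Filter.eventually_ge_atTop 1] with k hk
    show τ.matFun m (rt k) = τ.matFun m (matSAH (constSAH X A) m (matSAH (evSAH x₀) m (rt k)))
    rw [hconst k hk]

lemma cornerEmbed_matSAH {R S : Type*} [Ring R] [StarRing R] [Algebra ℂ R] [Ring S]
    [StarRing S] [Algebra ℂ S] (f : R →⋆ₐ[ℂ] S) {m K : ℕ} (a : Matrix (Fin m) (Fin m) R) :
    matSAH f K (cornerEmbed K a) = cornerEmbed K (matSAH f m a) := by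
  ext i j
  rw [matSAH_apply]
  by_cases h : (i : ℕ) < m ∧ (j : ℕ) < m
  · simp [cornerEmbed, h, matSAH_apply]
  · simp [cornerEmbed, h, map_zero]

end Transfer3


/-- If `X` is a nonempty compact metric space and `A` is a stably finite unital C*-algebra,
then `rc(A) ≤ rc(C(X, A))`. -/
theorem radiusCmp_le_radiusCmp_continuousMap (X : Type*) [MetricSpace X] [CompactSpace X]
    [Nonempty X] (A : Type*) [CStarAlgebra A] (hA : IsStablyFinite A) :
    radiusCmp A ≤ radiusCmp C(X, A) := by
  refine le_sInf fun w hw => ?_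
  obtain ⟨r, hr, rfl, hRC⟩ := hw
  refine sInf_le ⟨r, hr, rfl, ?_⟩
  intro m n hm hn a b ha hb hgap
  have x₀ : X := Classical.arbitrary X
  set K := max m n with hK
  obtain ⟨c, hc⟩ := hRC m n hm hn (matSAH (constSAH X A) m a) (matSAH (constSAH X A) n b)
    (ha.mapSAH _) (hb.mapSAH _)
    (fun τ da db hda hdb => hgap (pullbackQT τ) da db
      (isDimValue_pullback x₀ τ a da hda) (isDimValue_pullback x₀ τ b db hdb))
  refine ⟨fun j => matSAH (evSAH x₀) K (c j), ?_⟩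
  have hcont : Continuous fun M : Matrix (Fin K) (Fin K) C(X, A) => matSAH (evSAH x₀) K M := by
    apply continuous_pi
    intro i
    apply continuous_pi
    intro j
    show Continuous fun M : Matrix (Fin K) (Fin K) C(X, A) => (M i j) x₀
    exact (continuous_eval_const x₀).comp
      ((continuous_apply j).comp (continuous_apply i))
  have h2 := (hcont.tendsto _).comp hc
  have hB : matSAH (evSAH x₀) K (cornerEmbed K (matSAH (constSAH X A) n b))
      = cornerEmbed K b := by
    rw [cornerEmbed_matSAH, ev_const_matrix]
  have hAc : matSAH (evSAH x₀) K (cornerEmbed K (matSAH (constSAH X A) m a))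
      = cornerEmbed K a := by
    rw [cornerEmbed_matSAH, ev_const_matrix]
  rw [hAc] at h2
  refine h2.congr fun j => ?_
  show matSAH (evSAH x₀) K (c j * cornerEmbed K (matSAH (constSAH X A) n b) * star (c j)) = _
  rw [map_mul, map_mul, map_star, hB]
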